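/- Let n, δ ∈ ℕ with δ ≥ 3 and n ≥ 8. If G is a connected, C₄-free graph of order n, minimum degree δ and diameter d, then π(G) ≥ (δ² − 2⌊δ/2⌋ + 1)(d−4)(d−3)/(20(n−1)). -/

import Mathlib

private lemma aux_dist_getVert_le {V : Type*} {G : SimpleGraph V} (hc : G.Connected)
    {u w : V} (p : G.Walk u w) : ∀ q, G.dist u (p.getVert q) ≤ q := by
  intro q
  induction q with
  | zero => simp
  | succ q ih =>
    by_cases hq : q < p.length
    · have hadj : G.dist (p.getVert q) (p.getVert (q+1)) = 1 :=
        SimpleGraph.dist_eq_one_iff_adj.mpr (p.adj_getVert_succ hq)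
      have := hc.dist_triangle (u := u) (v := p.getVert q) (w := p.getVert (q+1))
      omega
    · rw [p.getVert_of_length_le (by omega)]
      exact le_trans (SimpleGraph.dist_le p) (by omega)

private lemma aux_sumF : ∀ t : ℕ, 2 * (∑ j ∈ Finset.range (t+1), (j - 2)) = (t-1)*(t-2) := by
  intro t
  induction t with
  | zero => simp
  | succ t ih =>
    rw [Finset.sum_range_succ, Nat.mul_add, ih]
    rcases t with _ | _ | s
    · simp
    · simp
    · have h1 : s + 1 + 1 - 1 = s + 1 := by omega
      have h2 : s + 1 + 1 - 2 = s := by omega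
      have h3 : s + 1 + 1 + 1 - 1 = s + 2 := by omega
      have h4 : s + 1 + 1 + 1 - 2 = s + 1 := by omega
      rw [h1, h2, h3, h4]
      ring

private lemma aux_even {V : Type*} [Fintype V] [DecidableEq V] (N : Finset V) (f : V → V)
    (hmem : ∀ w ∈ N, f w ∈ N) (hne : ∀ w ∈ N, f w ≠ w) (hinv : ∀ w ∈ N, f (f w) = w) :
    Even N.card := by
  classical
  let e := Fintype.equivFin V
  set s1 := N.filter (fun w => e w < e (f w)) with hs1
  set s2 := N.filter (fun w => e (f w) < e w) with hs2
  have hunion : N = s1 ∪ s2 := by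
    ext w
    simp only [hs1, hs2, Finset.mem_union, Finset.mem_filter]
    constructor
    · intro hw
      have : e w ≠ e (f w) := fun h => hne w hw (e.injective h.symm)
      rcases lt_or_gt_of_ne this with h | h
      · exact Or.inl ⟨hw, h⟩
      · exact Or.inr ⟨hw, h⟩
    · rintro (⟨hw, _⟩ | ⟨hw, _⟩) <;> exact hw
  have hdisj : Disjoint s1 s2 := by
    rw [Finset.disjoint_left]
    intro w h1 h2
    simp only [hs1, hs2, Finset.mem_filter] at h1 h2
    exact absurd h1.2 (not_lt.mpr h2.2.le)
  have hcard : s1.card = s2.card := by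
    apply Finset.card_bij' (fun w _ => f w) (fun w _ => f w)
    · intro w hw
      simp only [hs1, Finset.mem_filter] at hw
      simp only [hs2, Finset.mem_filter]
      rw [hinv w hw.1]
      exact ⟨hmem w hw.1, hw.2⟩
    · intro w hw
      simp only [hs2, Finset.mem_filter] at hw
      simp only [hs1, Finset.mem_filter]
      rw [hinv w hw.1]
      exact ⟨hmem w hw.1, hw.2⟩
    · intro w hw
      simp only [hs1, Finset.mem_filter] at hw
      exact hinv w hw.1
    · intro w hw
      simp only [hs2, Finset.mem_filter] at hw
      exact hinv w hw.1
  rw [hunion, Finset.card_union_of_disjoint hdisj, hcard]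
  exact ⟨s2.card, by ring⟩

private lemma aux_numeric (d a : ℕ) (ha : a ≤ d) :
    (d-4)*(d-3) ≤ 4 * ∑ q ∈ Finset.range (d+1), ((q - a) + (a - q) - 2) := by
  set L : ℕ → ℕ := fun q => (q - a) + (a - q) - 2 with hL
  have hsplit : ∑ q ∈ Finset.range (d+1), L q
      = (∑ q ∈ Finset.range (a+1), L q) + ∑ q ∈ Finset.Ico (a+1) (d+1), L q := by
    rw [Finset.range_eq_Ico,
      ← Finset.sum_Ico_consecutive _ (by omega : 0 ≤ a+1) (by omega : a+1 ≤ d+1),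
      ← Finset.range_eq_Ico]
  have h1 : ∑ q ∈ Finset.range (a+1), L q = ∑ j ∈ Finset.range (a+1), (j - 2) := by
    rw [← Finset.sum_range_reflect (fun j => j - 2) (a+1)]
    apply Finset.sum_congr rfl
    intro q hq
    rw [Finset.mem_range] at hq
    simp only [hL]
    omega
  have h2 : ∑ q ∈ Finset.Ico (a+1) (d+1), L q = ∑ j ∈ Finset.range (d - a + 1), (j - 2) := by
    rw [Finset.sum_Ico_eq_sum_range, Finset.sum_range_succ' (fun j => j - 2) (d - a)]
    have e0 : d + 1 - (a + 1) = d - a := by omega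
    rw [e0]
    have e1 : (0:ℕ) - 2 = 0 := rfl
    rw [e1, add_zero]
    apply Finset.sum_congr rfl
    intro q hq
    rw [Finset.mem_range] at hq
    simp only [hL]
    omega
  set b := d - a with hb
  have hgoal : (d-4)*(d-3) ≤ 2*((a-1)*(a-2)) + 2*((b-1)*(b-2)) := by
    set pa := (a-1)*(a-2) with hpa
    set pb := (b-1)*(b-2) with hpb
    rcases Nat.lt_or_ge a 3 with hc | hc
    · have e1 : d - 4 ≤ b - 2 := by omega
      have e2 : d - 3 ≤ b - 1 := by omega
      have e3 : (d-4)*(d-3) ≤ (b-1)*(b-2) := by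
        rw [mul_comm (b-1)]
        exact Nat.mul_le_mul e1 e2
      rw [← hpb] at e3
      omega
    rcases Nat.lt_or_ge b 3 with hc2 | hc2
    · have e1 : d - 4 ≤ a - 2 := by omega
      have e2 : d - 3 ≤ a - 1 := by omega
      have e3 : (d-4)*(d-3) ≤ (a-1)*(a-2) := by
        rw [mul_comm (a-1)]
        exact Nat.mul_le_mul e1 e2
      rw [← hpa] at e3
      omega
    · rw [hpa, hpb]
      have hd6 : 6 ≤ d := by omega
      zify [show 4 ≤ d by omega, show 3 ≤ d by omega, show 1 ≤ a by omega,
        show 2 ≤ a by omega, show 1 ≤ b by omega, show 2 ≤ b by omega]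
      have hab : (a:ℤ) + (b:ℤ) = (d:ℤ) := by
        have : a + b = d := by omega
        exact_mod_cast this
      nlinarith [sq_nonneg ((a:ℤ) - (b:ℤ))]
  calc (d-4)*(d-3) ≤ 2*((a-1)*(a-2)) + 2*((b-1)*(b-2)) := hgoal
  _ = 4 * (∑ j ∈ Finset.range (a+1), (j-2)) + 4 * (∑ j ∈ Finset.range (b+1), (j-2)) := by
      rw [← aux_sumF a, ← aux_sumF b]; ring
  _ = 4 * ∑ q ∈ Finset.range (d+1), L q := by
      rw [hsplit, h1, h2]; ring

private lemma aux_ball {V : Type*} [Fintype V] [DecidableEq V] (G : SimpleGraph V)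
    [DecidableRel G.Adj] (hconn : G.Connected)
    (hc4 : ∀ a b c d : V, G.Adj a b → G.Adj b c → G.Adj c d → G.Adj d a → a ≠ c → b ≠ d → False)
    (h3 : 3 ≤ G.minDegree) (x : V) :
    ∃ B : Finset V, (∀ z ∈ B, G.dist x z ≤ 2) ∧
      G.minDegree ^ 2 - 2 * (G.minDegree / 2) + 1 ≤ B.card := by
  classical
  set δ := G.minDegree with hδ
  set N := G.neighborFinset x with hN
  have hadjN : ∀ w, w ∈ N → G.Adj x w := by
    intro w hw; rwa [hN, SimpleGraph.mem_neighborFinset] at hw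
  set P : V → Finset V := fun w => G.neighborFinset w \ insert x N with hP
  refine ⟨insert x (N ∪ N.biUnion P), ?_, ?_⟩
  · intro z hz
    rcases Finset.mem_insert.mp hz with rfl | hz
    · rw [SimpleGraph.dist_self]; omega
    rcases Finset.mem_union.mp hz with hz | hz
    · have : G.dist x z = 1 := SimpleGraph.dist_eq_one_iff_adj.mpr (hadjN z hz)
      omega
    · obtain ⟨w, hw, hzw⟩ := Finset.mem_biUnion.mp hz
      have h1 : G.dist x w = 1 := SimpleGraph.dist_eq_one_iff_adj.mpr (hadjN w hw)
      have h2 : G.dist w z = 1 := by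
        apply SimpleGraph.dist_eq_one_iff_adj.mpr
        have := (Finset.mem_sdiff.mp hzw).1
        rwa [SimpleGraph.mem_neighborFinset] at this
      have := hconn.dist_triangle (u := x) (v := w) (w := z)
      omega
  -- cardinality
  have hxN : x ∉ N := by
    rw [hN, SimpleGraph.mem_neighborFinset]
    exact G.irrefl
  have hadjP : ∀ w z, z ∈ P w → G.Adj w z ∧ z ≠ x ∧ z ∉ N := by
    intro w z hz
    rw [hP] at hz
    obtain ⟨h1, h2⟩ := Finset.mem_sdiff.mp hz
    rw [SimpleGraph.mem_neighborFinset] at h1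
    simp only [Finset.mem_insert, not_or] at h2
    exact ⟨h1, h2.1, h2.2⟩
  have hdisjP : ∀ w1 ∈ N, ∀ w2 ∈ N, w1 ≠ w2 → Disjoint (P w1) (P w2) := by
    intro w1 h1 w2 h2 hne
    rw [Finset.disjoint_left]
    intro z hz1 hz2
    obtain ⟨ha1, hzx, _⟩ := hadjP w1 z hz1
    obtain ⟨ha2, _, _⟩ := hadjP w2 z hz2
    exact hc4 x w1 z w2 (hadjN w1 h1) ha1 ha2.symm (hadjN w2 h2).symm
      (fun h => hzx h.symm) hne
  have hdisj1 : Disjoint N (N.biUnion P) := by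
    rw [Finset.disjoint_left]
    intro z hz hz2
    obtain ⟨w, hw, hzw⟩ := Finset.mem_biUnion.mp hz2
    exact (hadjP w z hzw).2.2 hz
  have hxout : x ∉ N ∪ N.biUnion P := by
    rw [Finset.mem_union]
    rintro (h | h)
    · exact hxN h
    · obtain ⟨w, hw, hzw⟩ := Finset.mem_biUnion.mp h
      exact (hadjP w x hzw).2.1 rfl
  have hcard : (insert x (N ∪ N.biUnion P)).card = 1 + N.card + ∑ w ∈ N, (P w).card := by
    rw [Finset.card_insert_of_notMem hxout, Finset.card_union_of_disjoint hdisj1,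
      Finset.card_biUnion hdisjP]
    ring
  rw [hcard]
  set k := N.card with hk
  have hkδ : δ ≤ k := by
    rw [hk, hN, SimpleGraph.card_neighborFinset_eq_degree]
    exact G.minDegree_le_degree x
  set m : V → ℕ := fun w => (G.neighborFinset w ∩ N).card with hm
  have hm1 : ∀ w ∈ N, m w ≤ 1 := by
    intro w hw
    by_contra h
    push_neg at h
    simp only [hm] at h
    obtain ⟨z1, hz1, z2, hz2, hz12⟩ := Finset.one_lt_card.mp h
    rw [Finset.mem_inter, SimpleGraph.mem_neighborFinset] at hz1 hz2
    exact hc4 x z1 w z2 (hadjN z1 hz1.2) hz1.1.symm hz2.1 (hadjN z2 hz2.2).symm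
      (fun h => (G.irrefl (h ▸ hadjN w hw))) hz12
  have hPc : ∀ w ∈ N, δ ≤ (P w).card + 1 + m w := by
    intro w hw
    have hd : δ ≤ (G.neighborFinset w).card := by
      rw [SimpleGraph.card_neighborFinset_eq_degree]
      exact G.minDegree_le_degree w
    have hsplit := Finset.card_inter_add_card_sdiff (G.neighborFinset w) (insert x N)
    have hsub : G.neighborFinset w ∩ insert x N ⊆ insert x (G.neighborFinset w ∩ N) := by
      intro z hz
      rw [Finset.mem_inter, Finset.mem_insert] at hz
      rcases hz.2 with rfl | hz2
      · exact Finset.mem_insert_self _ _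
      · exact Finset.mem_insert_of_mem (Finset.mem_inter.mpr ⟨hz.1, hz2⟩)
    have h6 := Finset.card_le_card hsub
    have h7 := Finset.card_insert_le x (G.neighborFinset w ∩ N)
    simp only [hP, hm]
    omega
  set S := ∑ w ∈ N, (P w).card with hS
  set M := ∑ w ∈ N, m w with hM
  have hsum : k * δ ≤ S + k + M := by
    calc k * δ = ∑ _w ∈ N, δ := by rw [Finset.sum_const, smul_eq_mul, mul_comm]
    _ ≤ ∑ w ∈ N, ((P w).card + 1 + m w) := Finset.sum_le_sum hPc
    _ = S + k + M := by
        rw [Finset.sum_add_distrib, Finset.sum_add_distrib, Finset.sum_const, smul_eq_mul, mul_one]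
  have hMk : M ≤ k := by
    calc M ≤ ∑ _w ∈ N, 1 := Finset.sum_le_sum hm1
    _ = k := by simp [hk]
  have key : δ * δ ≤ 2 * (δ / 2) + k + S := by
    by_cases hM2 : M ≤ 2 * (δ / 2)
    · have h1 : δ * δ ≤ k * δ := Nat.mul_le_mul_right δ hkδ
      linarith
    · push_neg at hM2
      rcases Nat.lt_or_ge k (δ + 1) with hkk | hkk
      · -- k = δ, M = δ, δ odd: parity contradiction
        exfalso
        have hkeq : k = δ := by omega
        have hall : ∀ w ∈ N, m w = 1 := by
          by_contra hco
          push_neg at hco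
          obtain ⟨w0, hw0, hmw0⟩ := hco
          have hmw00 : m w0 = 0 := by have := hm1 w0 hw0; omega
          have hlt : M < k := by
            have e1 : M = m w0 + ∑ w ∈ N.erase w0, m w := (Finset.add_sum_erase N m hw0).symm
            have e2 : ∑ w ∈ N.erase w0, m w ≤ ∑ _w ∈ N.erase w0, 1 :=
              Finset.sum_le_sum (fun w hw => hm1 w (Finset.mem_of_mem_erase hw))
            have e3 : ∑ _w ∈ N.erase w0, (1:ℕ) = (N.erase w0).card := by simp
            have e4 : (N.erase w0).card < N.card := Finset.card_erase_lt_of_mem hw0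
            omega
          -- M ≥ 2*(δ/2)+1 ≥ δ = k, contradiction
          omega
        have hex : ∀ w : V, ∃ z, w ∈ N → G.neighborFinset w ∩ N = {z} := by
          intro w
          by_cases hw : w ∈ N
          · obtain ⟨z, hz⟩ := Finset.card_eq_one.mp (hall w hw)
            exact ⟨z, fun _ => hz⟩
          · exact ⟨x, fun h => absurd h hw⟩
        choose f hf using hex
        have hmemf : ∀ w ∈ N, f w ∈ N ∧ G.Adj w (f w) := by
          intro w hw
          have hmm : f w ∈ G.neighborFinset w ∩ N := by
            rw [hf w hw]; exact Finset.mem_singleton_self _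
          rw [Finset.mem_inter, SimpleGraph.mem_neighborFinset] at hmm
          exact ⟨hmm.2, hmm.1⟩
        have heven : Even N.card := by
          apply aux_even N f
          · exact fun w hw => (hmemf w hw).1
          · intro w hw h
            exact G.irrefl (h ▸ (hmemf w hw).2)
          · intro w hw
            have h1 : w ∈ G.neighborFinset (f w) ∩ N := by
              rw [Finset.mem_inter, SimpleGraph.mem_neighborFinset]
              exact ⟨((hmemf w hw).2).symm, hw⟩
            rw [hf (f w) (hmemf w hw).1] at h1
            exact (Finset.mem_singleton.mp h1).symm
        obtain ⟨c, hc⟩ := heven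
        omega
      · -- k ≥ δ + 1
        obtain ⟨t, ht⟩ : ∃ t, δ = t + 3 := ⟨δ - 3, by omega⟩
        rw [ht] at hsum hkk ⊢
        have e1 : k * (t + 3) = k * (t + 1) + 2 * k := by ring
        have hkt : k * (t + 1) ≤ S := by
          rw [e1] at hsum; linarith
        have h2 : (t + 4) * (t + 1) ≤ k * (t + 1) := Nat.mul_le_mul_right _ hkk
        have e2 : (t + 4) * (t + 1) = t * t + 5 * t + 4 := by ring
        have e3 : (t + 3) * (t + 3) = t * t + 6 * t + 9 := by ring
        have hg : (t + 3) / 2 ≥ 1 := by omega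
        linarith
  -- conclude
  set D := δ ^ 2 with hD
  have key2 : D ≤ 2 * (δ / 2) + k + S := by rw [hD, sq]; exact key
  omega

theorem stmt13 {V : Type*} [Fintype V] [DecidableEq V] (G : SimpleGraph V)
    [DecidableRel G.Adj] (n δ d : ℕ) (hn : Fintype.card V = n) (hδ : G.minDegree = δ) (hconn : G.Connected) (h3 : 3 ≤ δ) (h8 : 8 ≤ n) (hc4 : (∀ a b c d : V, G.Adj a b → G.Adj b c → G.Adj c d → G.Adj d a → a ≠ c → b ≠ d → False))
    (hd : (Finset.univ.sup fun v : V => Finset.univ.sup fun w : V => G.dist v w) = d) :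
    ((δ ^ 2 - 2 * (δ / 2) + 1 : ℕ) : ℝ) * ((d : ℝ) - 4) * ((d : ℝ) - 3) / (20 * ((n : ℝ) - 1)) ≤ (⨅ v : V, (∑ w : V, (G.dist v w : ℝ)) / ((n : ℝ) - 1)) := by
  classical
  have hVne : Nonempty V := by
    rw [← Fintype.card_pos_iff]; omega
  have hδ3 : 3 ≤ G.minDegree := by rw [hδ]; exact h3
  choose B hB1 hB2 using fun x : V => aux_ball G hconn hc4 hδ3 x
  set A := δ ^ 2 - 2 * (δ / 2) + 1 with hA
  have hBA : ∀ x, A ≤ (B x).card := by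
    intro x
    have := hB2 x
    rw [hδ] at this
    rw [hA]
    exact this
  have hA7 : 7 ≤ A := by
    have h2 : δ ^ 2 = δ * δ := sq δ
    have h1 : 3 * δ ≤ δ * δ := Nat.mul_le_mul_right δ h3
    rw [hA, h2]
    set E := δ * δ with hE
    omega
  have hAn : A ≤ n := by
    have hb := hBA (Classical.arbitrary V)
    have hcle : (B (Classical.arbitrary V)).card ≤ Fintype.card V := Finset.card_le_univ _
    omega
  have hn1 : (0:ℝ) < (n:ℝ) - 1 := by
    have : (8:ℝ) ≤ (n:ℝ) := by exact_mod_cast h8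
    linarith
  apply le_ciInf
  intro v
  set Snat := ∑ w : V, G.dist v w with hSnat
  have hcast : (Snat:ℝ) = ∑ w : V, (G.dist v w : ℝ) := by rw [hSnat]; push_cast; rfl
  rw [← hcast]
  have hSn : n - 1 ≤ Snat := by
    have e1 : ∑ _w ∈ Finset.univ.erase v, 1 ≤ ∑ w ∈ Finset.univ.erase v, G.dist v w := by
      apply Finset.sum_le_sum
      intro w hw
      exact hconn.pos_dist_of_ne (Ne.symm (Finset.ne_of_mem_erase hw))
    have e2 : ∑ w ∈ Finset.univ.erase v, G.dist v w ≤ Snat := by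
      rw [hSnat]
      exact Finset.sum_le_sum_of_subset (Finset.subset_univ _)
    have e3 : ∑ _w ∈ Finset.univ.erase v, (1:ℕ) = n - 1 := by
      rw [Finset.sum_const, smul_eq_mul, mul_one, Finset.card_erase_of_mem (Finset.mem_univ v),
        Finset.card_univ, hn]
    omega
  have key : (A:ℝ) * ((d:ℝ) - 4) * ((d:ℝ) - 3) ≤ 20 * (Snat:ℝ) := by
    rcases Nat.lt_or_ge d 5 with hd5 | hd5
    · -- small diameter cases
      have hSn' : (n:ℝ) - 1 ≤ (Snat:ℝ) := by
        have e1 : ((n - 1 : ℕ):ℝ) ≤ (Snat:ℝ) := by exact_mod_cast hSn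
        have e2 : ((n - 1 : ℕ):ℝ) = (n:ℝ) - 1 := by
          rw [Nat.cast_sub (by omega : 1 ≤ n)]; norm_num
        linarith
      rcases Nat.lt_or_ge d 3 with hd3 | hd3
      · have hA' : (7:ℝ) ≤ (A:ℝ) := by exact_mod_cast hA7
        have hAn' : (A:ℝ) ≤ (n:ℝ) := by exact_mod_cast hAn
        have hd' : (d:ℝ) ≤ 2 := by exact_mod_cast (by omega : d ≤ 2)
        have hd0 : (0:ℝ) ≤ (d:ℝ) := Nat.cast_nonneg d
        nlinarith [mul_nonneg (mul_nonneg (by positivity : (0:ℝ) ≤ (A:ℝ)) hd0)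
          (by linarith : (0:ℝ) ≤ 7 - (d:ℝ))]
      · have e1 : ((d:ℝ) - 4) ≤ 0 := by
          have : (d:ℝ) ≤ 4 := by exact_mod_cast (by omega : d ≤ 4)
          linarith
        have e2 : (0:ℝ) ≤ (d:ℝ) - 3 := by
          have : (3:ℝ) ≤ (d:ℝ) := by exact_mod_cast hd3
          linarith
        have e3 : (0:ℝ) ≤ (Snat:ℝ) := Nat.cast_nonneg _
        nlinarith [mul_nonneg (mul_nonneg (Nat.cast_nonneg A : (0:ℝ) ≤ (A:ℝ))
          (by linarith : (0:ℝ) ≤ 4 - (d:ℝ))) e2, e3]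
    · -- main case : d ≥ 5
      obtain ⟨u, -, hu⟩ := Finset.exists_mem_eq_sup (Finset.univ : Finset V)
        ⟨Classical.arbitrary V, Finset.mem_univ _⟩
        (fun v : V => Finset.univ.sup fun w : V => G.dist v w)
      obtain ⟨w, -, hw⟩ := Finset.exists_mem_eq_sup (Finset.univ : Finset V)
        ⟨Classical.arbitrary V, Finset.mem_univ _⟩ (fun w : V => G.dist u w)
      have huw : G.dist u w = d := by rw [← hd, hu, hw]
      have hdall : ∀ x y : V, G.dist x y ≤ d := by
        intro x y
        rw [← hd]
        exact le_trans (Finset.le_sup (Finset.mem_univ y))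
          (Finset.le_sup (f := fun v : V => Finset.univ.sup fun w : V => G.dist v w)
            (Finset.mem_univ x))
      obtain ⟨p, hp⟩ := hconn.exists_walk_length_eq_dist u w
      rw [huw] at hp
      set y : ℕ → V := fun q => p.getVert q with hy
      have hy1 : ∀ q, q ≤ d → G.dist u (y q) = q := by
        intro q hq
        have hle : G.dist u (y q) ≤ q := by
          simpa [hy] using aux_dist_getVert_le hconn p q
        have hge : G.dist w (y q) ≤ d - q := by
          have hrev : p.reverse.getVert (d - q) = y q := by
            rw [SimpleGraph.Walk.getVert_reverse, hp]
            simp only [hy]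
            congr 1
            omega
          rw [← hrev]
          exact aux_dist_getVert_le hconn p.reverse (d - q)
        have htri : G.dist u w ≤ G.dist u (y q) + G.dist (y q) w := hconn.dist_triangle
        have hcm : G.dist (y q) w = G.dist w (y q) := SimpleGraph.dist_comm
        omega
      set a := G.dist u v with ha
      have had : a ≤ d := hdall u v
      set L : ℕ → ℕ := fun q => (q - a) + (a - q) - 2 with hL
      have hLd : ∀ q, q ≤ d → ∀ z ∈ B (y q), L q ≤ G.dist v z := by
        intro q hq z hz
        have h1 : G.dist u (y q) = q := hy1 q hq
        have h2 : G.dist (y q) z ≤ 2 := hB1 (y q) z hz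
        have t1 : G.dist u (y q) ≤ G.dist u v + G.dist v (y q) := hconn.dist_triangle
        have t2 : G.dist u v ≤ G.dist u (y q) + G.dist (y q) v := hconn.dist_triangle
        have t3 : G.dist v (y q) ≤ G.dist v z + G.dist z (y q) := hconn.dist_triangle
        have c1 : G.dist (y q) v = G.dist v (y q) := SimpleGraph.dist_comm
        have c2 : G.dist z (y q) = G.dist (y q) z := SimpleGraph.dist_comm
        simp only [hL]
        omega
      set Qf : ℕ → Finset ℕ := fun r => (Finset.range (d+1)).filter (fun q => q % 5 = r) with hQf
      have htotal : ∑ r ∈ Finset.range 5, ∑ q ∈ Qf r, L q = ∑ q ∈ Finset.range (d+1), L q := by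
        rw [hQf]
        exact Finset.sum_fiberwise_of_maps_to (fun q _ => Finset.mem_range.mpr (Nat.mod_lt q (by omega))) L
      obtain ⟨r0, hr0mem, hr0⟩ := Finset.exists_max_image (Finset.range 5)
        (fun r => ∑ q ∈ Qf r, L q) ⟨0, by simp⟩
      have h5S : ∑ q ∈ Finset.range (d+1), L q ≤ 5 * ∑ q ∈ Qf r0, L q := by
        rw [← htotal]
        calc ∑ r ∈ Finset.range 5, ∑ q ∈ Qf r, L q
            ≤ ∑ _r ∈ Finset.range 5, ∑ q ∈ Qf r0, L q := Finset.sum_le_sum (fun r hr => hr0 r hr)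
        _ = 5 * ∑ q ∈ Qf r0, L q := by
            rw [Finset.sum_const, Finset.card_range, smul_eq_mul]
      have hQd : ∀ q ∈ Qf r0, q ≤ d := by
        intro q hq
        rw [hQf] at hq
        have := (Finset.mem_filter.mp hq).1
        rw [Finset.mem_range] at this
        omega
      have hsep : ∀ q1 ∈ Qf r0, ∀ q2 ∈ Qf r0, q1 ≠ q2 → Disjoint (B (y q1)) (B (y q2)) := by
        intro q1 h1 q2 h2 hne
        rw [hQf] at h1 h2
        obtain ⟨hm1, hmod1⟩ := Finset.mem_filter.mp h1
        obtain ⟨hm2, hmod2⟩ := Finset.mem_filter.mp h2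
        rw [Finset.mem_range] at hm1 hm2
        rw [Finset.disjoint_left]
        intro z hz1 hz2
        have d1 : G.dist (y q1) z ≤ 2 := hB1 _ _ hz1
        have d2 : G.dist (y q2) z ≤ 2 := hB1 _ _ hz2
        have e1 : G.dist u (y q1) = q1 := hy1 q1 (by omega)
        have e2 : G.dist u (y q2) = q2 := hy1 q2 (by omega)
        have t1 : G.dist u (y q2) ≤ G.dist u (y q1) + G.dist (y q1) (y q2) := hconn.dist_triangle
        have t2 : G.dist u (y q1) ≤ G.dist u (y q2) + G.dist (y q2) (y q1) := hconn.dist_triangle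
        have t3 : G.dist (y q1) (y q2) ≤ G.dist (y q1) z + G.dist z (y q2) := hconn.dist_triangle
        have c1 : G.dist (y q2) (y q1) = G.dist (y q1) (y q2) := SimpleGraph.dist_comm
        have c2 : G.dist z (y q2) = G.dist (y q2) z := SimpleGraph.dist_comm
        omega
      have hch : A * ∑ q ∈ Qf r0, L q ≤ Snat := by
        calc A * ∑ q ∈ Qf r0, L q = ∑ q ∈ Qf r0, A * L q := Finset.mul_sum _ _ _
        _ ≤ ∑ q ∈ Qf r0, ∑ z ∈ B (y q), G.dist v z := by
            apply Finset.sum_le_sum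
            intro q hq
            calc A * L q ≤ (B (y q)).card * L q := Nat.mul_le_mul_right _ (hBA (y q))
            _ = (B (y q)).card • L q := (smul_eq_mul _ _).symm
            _ ≤ ∑ z ∈ B (y q), G.dist v z :=
                Finset.card_nsmul_le_sum _ _ _ (fun z hz => hLd q (hQd q hq) z hz)
        _ = ∑ z ∈ (Qf r0).biUnion (fun q => B (y q)), G.dist v z := by
            rw [Finset.sum_biUnion]
            intro q1 h1 q2 h2 hne
            exact hsep q1 h1 q2 h2 hne
        _ ≤ Snat := by
            rw [hSnat]
            exact Finset.sum_le_sum_of_subset (Finset.subset_univ _)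
      have hnum : (d-4)*(d-3) ≤ 4 * ∑ q ∈ Finset.range (d+1), L q := by
        rw [hL]
        exact aux_numeric d a had
      have hfinal : A * ((d-4)*(d-3)) ≤ 20 * Snat := by
        calc A * ((d-4)*(d-3)) ≤ A * (4 * ∑ q ∈ Finset.range (d+1), L q) :=
            Nat.mul_le_mul_left _ hnum
        _ ≤ A * (4 * (5 * ∑ q ∈ Qf r0, L q)) :=
            Nat.mul_le_mul_left _ (Nat.mul_le_mul_left _ h5S)
        _ = 20 * (A * ∑ q ∈ Qf r0, L q) := by ring
        _ ≤ 20 * Snat := Nat.mul_le_mul_left _ hch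
      have hc1 : ((d:ℝ) - 4) = ((d - 4 : ℕ) : ℝ) := by
        rw [Nat.cast_sub (by omega : 4 ≤ d)]; norm_num
      have hc2 : ((d:ℝ) - 3) = ((d - 3 : ℕ) : ℝ) := by
        rw [Nat.cast_sub (by omega : 3 ≤ d)]; norm_num
      rw [hc1, hc2]
      rw [mul_assoc]
      exact_mod_cast hfinal
  rw [div_le_div_iff₀ (by positivity) hn1]
  nlinarith [key, hn1]
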